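/- If K = S^d and σ is an α-positive homogeneous activation with α a non-negative integer, then the F_1 and F_2 integral probability metrics are not distances on probability measures on K: there exist probability measures μ ≠ ν on S^d with ∫ σ(⟨x,θ⟩) dμ(x) = ∫ σ(⟨x,θ⟩) dν(x) for all θ ∈ S^d. -/

import Mathlib

open MeasureTheory
open scoped RealInnerProductSpace
open Real intervalIntegral

/-- `(t)_+^α`, the α-th power of the ReLU, with the threshold convention for `α = 0`. -/
noncomputable def reluPow (α : ℕ) (t : ℝ) : ℝ := if 0 < t then t ^ α else 0


lemma reluPow_zero (α : ℕ) : reluPow α 0 = 0 := by simp [reluPow]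

lemma reluPow_identity (α : ℕ) {t : ℝ} (ht : t ≠ 0) :
    reluPow α t + (-1 : ℝ) ^ α * reluPow α (-t) = t ^ α := by
  rcases ht.lt_or_gt with h | h
  · simp only [reluPow, if_neg (not_lt.2 h.le), if_pos (by linarith : (0:ℝ) < -t)]
    rw [← neg_pow]; ring_nf
  · simp only [reluPow, if_pos h, if_neg (by simp [not_lt]; linarith : ¬ (0:ℝ) < -t)]
    ring

lemma measurable_reluPow (α : ℕ) : Measurable (reluPow α) := by
  unfold reluPow
  exact Measurable.ite (measurableSet_lt measurable_const measurable_id)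
    (measurable_id.pow_const α) measurable_const

lemma abs_reluPow_le (α : ℕ) (t : ℝ) : |reluPow α t| ≤ |t| ^ α := by
  unfold reluPow
  split_ifs with h
  · rw [abs_pow]
  · rw [abs_zero]; positivity

lemma integral_exp_even {n : ℤ} (hn : n ≠ 0) (he : Even n) :
    ∫ φ : ℝ in (0:ℝ)..π, Complex.exp (n * φ * Complex.I) = 0 := by
  have hc : (n : ℂ) * Complex.I ≠ 0 := by
    simp [Complex.ext_iff, hn, Complex.I_ne_zero]
  have := integral_exp_mul_complex (a := 0) (b := π) hc
  rw [show (fun x : ℝ => Complex.exp ((n:ℂ) * x * Complex.I))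
      = fun x : ℝ => Complex.exp ((n:ℂ) * Complex.I * x) by funext x; ring_nf] at *
  rw [this]
  obtain ⟨m, rfl⟩ := he
  have h1 : ((m + m : ℤ) : ℂ) * Complex.I * (π : ℂ) = (m : ℂ) * (2 * π * Complex.I) := by
    push_cast; ring
  rw [h1, Complex.exp_int_mul_two_pi_mul_I]
  simp

open Complex in

lemma key_poly (α : ℕ) (u v : ℝ) :
    ∫ φ in (0:ℝ)..π, (u * Real.cos φ + v * Real.sin φ) ^ α * Real.cos ((α + 2 : ℕ) * φ) = 0 := by
  set M : ℕ := α + 2 with hM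
  set w : ℂ := u - v * I with hw
  set wb : ℂ := u + v * I with hwb
  set c : ℕ → ℂ := fun k => (α.choose k : ℂ) * w ^ k * wb ^ (α - k) / 2 ^ (α + 1) with hc
  set g : ℕ → ℝ → ℂ := fun k φ =>
    c k * (Complex.exp ((2 * k - α + M : ℤ) * φ * I) + Complex.exp ((2 * k - α - M : ℤ) * φ * I))
    with hg
  have hE1 : ∀ φ : ℝ, Complex.exp (φ * I) = (Real.cos φ : ℂ) + (Real.sin φ : ℂ) * I := by
    intro φ; rw [Complex.exp_mul_I, Complex.ofReal_cos, Complex.ofReal_sin]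
  have hE2 : ∀ φ : ℝ, Complex.exp (-(φ * I)) = (Real.cos φ : ℂ) - (Real.sin φ : ℂ) * I := by
    intro φ
    rw [show -((φ:ℂ) * I) = ((-φ : ℝ) : ℂ) * I by push_cast; ring, Complex.exp_mul_I,
      Complex.ofReal_cos, Complex.ofReal_sin]
    push_cast
    rw [Complex.cos_neg, Complex.sin_neg]
    ring
  have h1 : ∀ φ : ℝ, ((u * Real.cos φ + v * Real.sin φ : ℝ) : ℂ) =
      (w * Complex.exp (φ * I) + wb * Complex.exp (-(φ * I))) / 2 := by
    intro φ
    rw [hE1, hE2, hw, hwb]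
    push_cast
    linear_combination ((v:ℂ) * Complex.sin (φ:ℂ)) * Complex.I_sq
  have hcos : ∀ y : ℝ, ((Real.cos y : ℝ) : ℂ) = (Complex.exp (y * I) + Complex.exp (-(y * I))) / 2 := by
    intro y
    rw [Complex.ofReal_cos, Complex.cos, neg_mul]
  have hpoint : ∀ φ : ℝ, (((u * Real.cos φ + v * Real.sin φ) ^ α * Real.cos (M * φ) : ℝ) : ℂ) =
      ∑ k ∈ Finset.range (α + 1), g k φ := by
    intro φ
    rw [Complex.ofReal_mul, Complex.ofReal_pow]
    rw [h1, hcos ((M:ℝ) * φ), div_pow, add_pow]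
    rw [Finset.sum_div, Finset.sum_mul]
    refine Finset.sum_congr rfl fun k hk => ?_
    have hkα : k ≤ α := Nat.lt_succ_iff.mp (Finset.mem_range.mp hk)
    have e1 : (w * Complex.exp (φ * I)) ^ k = w ^ k * Complex.exp ((k : ℂ) * (φ * I)) := by
      rw [mul_pow, ← Complex.exp_nat_mul]
    have e2 : (wb * Complex.exp (-(φ * I))) ^ (α - k)
        = wb ^ (α - k) * Complex.exp (((α : ℂ) - k) * (-(φ * I))) := by
      rw [mul_pow, ← Complex.exp_nat_mul, Nat.cast_sub hkα]
    have e3 : ((M : ℝ) * φ : ℝ) = (M : ℝ) * φ := rfl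
    have hM1 : Complex.exp (((M * φ : ℝ) : ℂ) * I) = Complex.exp ((M : ℂ) * φ * I) := by
      push_cast; ring_nf
    have hM2 : Complex.exp (-(((M * φ : ℝ) : ℂ) * I)) = Complex.exp (-((M : ℂ) * φ * I)) := by
      push_cast; ring_nf
    have comb1 : w ^ k * Complex.exp ((k : ℂ) * (φ * I)) * (wb ^ (α - k) * Complex.exp (((α : ℂ) - k) * (-(φ * I)))) *
        (α.choose k : ℂ) / 2 ^ α * (Complex.exp ((M : ℂ) * φ * I) / 2)
        = c k * Complex.exp ((2 * k - α + M : ℤ) * φ * I) := by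
      rw [hc]
      rw [show ((2 * (k:ℤ) - α + M : ℤ) : ℂ) * φ * I
            = (k : ℂ) * (φ * I) + ((α : ℂ) - k) * (-(φ * I)) + (M : ℂ) * φ * I by push_cast; ring,
        Complex.exp_add, Complex.exp_add]
      ring
    have comb2 : w ^ k * Complex.exp ((k : ℂ) * (φ * I)) * (wb ^ (α - k) * Complex.exp (((α : ℂ) - k) * (-(φ * I)))) *
        (α.choose k : ℂ) / 2 ^ α * (Complex.exp (-((M : ℂ) * φ * I)) / 2)
        = c k * Complex.exp ((2 * k - α - M : ℤ) * φ * I) := by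
      rw [hc]
      rw [show ((2 * (k:ℤ) - α - M : ℤ) : ℂ) * φ * I
            = (k : ℂ) * (φ * I) + ((α : ℂ) - k) * (-(φ * I)) + -((M : ℂ) * φ * I) by push_cast; ring,
        Complex.exp_add, Complex.exp_add]
      ring
    calc (w * Complex.exp (φ * I)) ^ k * (wb * Complex.exp (-(φ * I))) ^ (α - k) * (α.choose k : ℂ) / 2 ^ α *
          ((Complex.exp (((M * φ : ℝ) : ℂ) * I) + Complex.exp (-(((M * φ : ℝ) : ℂ) * I))) / 2)
        = c k * Complex.exp ((2 * k - α + M : ℤ) * φ * I) + c k * Complex.exp ((2 * k - α - M : ℤ) * φ * I) := by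
          rw [e1, e2, hM1, hM2, ← comb1, ← comb2]; ring
      _ = c k * (Complex.exp ((2 * k - α + M : ℤ) * φ * I) + Complex.exp ((2 * k - α - M : ℤ) * φ * I)) := by ring
      _ = g k φ := by rw [hg]
  have hgc : ∀ k : ℕ, Continuous (g k) := by
    intro k
    rw [hg]
    apply Continuous.mul continuous_const
    apply Continuous.add
    · exact Complex.continuous_exp.comp (by fun_prop)
    · exact Complex.continuous_exp.comp (by fun_prop)
  have hInt : ∀ k ∈ Finset.range (α + 1), IntervalIntegrable (g k) MeasureTheory.volume 0 Real.pi :=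
    fun k _ => (hgc k).intervalIntegrable 0 Real.pi
  have hmain : (((∫ φ in (0:ℝ)..Real.pi,
      (u * Real.cos φ + v * Real.sin φ) ^ α * Real.cos ((M:ℝ) * φ)) : ℝ) : ℂ) = 0 := by
    rw [← intervalIntegral.integral_ofReal]
    rw [intervalIntegral.integral_congr (g := fun φ => ∑ k ∈ Finset.range (α + 1), g k φ)
      (fun φ _ => hpoint φ)]
    rw [intervalIntegral.integral_finset_sum hInt]
    refine Finset.sum_eq_zero fun k hk => ?_
    have hkα : k ≤ α := Nat.lt_succ_iff.mp (Finset.mem_range.mp hk)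
    rw [hg]
    rw [intervalIntegral.integral_const_mul]
    have i1 : IntervalIntegrable (fun φ : ℝ => Complex.exp (((2 * k - α + M : ℤ) : ℂ) * φ * I))
        MeasureTheory.volume 0 Real.pi := by
      apply Continuous.intervalIntegrable; fun_prop
    have i2 : IntervalIntegrable (fun φ : ℝ => Complex.exp (((2 * k - α - M : ℤ) : ℂ) * φ * I))
        MeasureTheory.volume 0 Real.pi := by
      apply Continuous.intervalIntegrable; fun_prop
    rw [intervalIntegral.integral_add i1 i2]
    rw [integral_exp_even (by omega) ⟨(k:ℤ) + 1, by push_cast [hM]; ring⟩,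
      integral_exp_even (by omega) ⟨(k:ℤ) - α - 1, by push_cast [hM]; ring⟩]
    ring
  exact_mod_cast hmain


lemma zeros_countable {u v : ℝ} (h : ¬(u = 0 ∧ v = 0)) :
    {φ : ℝ | u * Real.cos φ + v * Real.sin φ = 0}.Countable := by
  set z : ℂ := v + u * Complex.I with hz
  have hz0 : z ≠ 0 := by
    rw [hz]
    intro hc
    rw [Complex.ext_iff] at hc
    simp at hc
    exact h ⟨hc.2, hc.1⟩
  have habs : ‖z‖ ≠ 0 := by simpa using hz0
  have key : ∀ φ : ℝ, u * Real.cos φ + v * Real.sin φ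
      = ‖z‖ * Real.sin (φ + Complex.arg z) := by
    intro φ
    rw [Real.sin_add, Complex.cos_arg hz0, Complex.sin_arg]
    have hre : z.re = v := by simp [hz]
    have him : z.im = u := by simp [hz]
    rw [hre, him]
    field_simp
    ring
  apply Set.Countable.mono (s₂ := Set.range fun k : ℤ => (k : ℝ) * Real.pi - Complex.arg z)
  · intro φ hφ
    rw [Set.mem_setOf_eq, key] at hφ
    have hs : Real.sin (φ + Complex.arg z) = 0 := by
      rcases mul_eq_zero.mp hφ with h' | h'
      · exact absurd h' habs
      · exact h'
    obtain ⟨k, hk⟩ := Real.sin_eq_zero_iff.mp hs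
    refine ⟨k, ?_⟩
    show (k : ℝ) * Real.pi - Complex.arg z = φ
    linarith
  · exact Set.countable_range _

lemma bracket_eq (α : ℕ) (a b : ℝ) {t : ℝ} (ht : t ≠ 0) :
    (a * reluPow α t + b * reluPow α (-t))
      + (-1 : ℝ) ^ α * (a * reluPow α (-t) + b * reluPow α t)
    = (a + (-1 : ℝ) ^ α * b) * t ^ α := by
  have h1 := reluPow_identity α ht
  have h2 := reluPow_identity α (neg_ne_zero.2 ht)
  rw [neg_neg] at h2
  have hsq : ((-1 : ℝ) ^ α) ^ 2 = 1 := by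
    rw [← pow_mul, mul_comm, pow_mul]; norm_num
  linear_combination a * h1 + b * h2

lemma key_sigma (α : ℕ) (a b u v : ℝ) :
    ∫ φ in (0:ℝ)..(2 * π),
      (a * reluPow α (u * Real.cos φ + v * Real.sin φ)
        + b * reluPow α (-(u * Real.cos φ + v * Real.sin φ))) * Real.cos ((α + 2 : ℕ) * φ)
      = 0 := by
  set M : ℕ := α + 2 with hM
  set t : ℝ → ℝ := fun φ => u * Real.cos φ + v * Real.sin φ with hts
  set G : ℝ → ℝ := fun φ => a * reluPow α (t φ) + b * reluPow α (-(t φ)) with hG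
  set F : ℝ → ℝ := fun φ => G φ * Real.cos ((M : ℝ) * φ) with hF
  have htm : Measurable t := by fun_prop
  have hGm : Measurable G := by
    rw [hG]
    exact (measurable_const.mul ((measurable_reluPow α).comp htm)).add
      (measurable_const.mul ((measurable_reluPow α).comp htm.neg))
  have hFm : Measurable F := by
    rw [hF]; exact hGm.mul (by fun_prop)
  set C : ℝ := (|a| + |b|) * (|u| + |v|) ^ α with hC
  have hbound : ∀ φ, |F φ| ≤ C := by
    intro φ
    rw [hF, hC]
    have h1 : |t φ| ≤ |u| + |v| := by
      rw [hts]
      refine (abs_add_le _ _).trans ?_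
      rw [abs_mul, abs_mul]
      have := Real.abs_cos_le_one φ
      have := Real.abs_sin_le_one φ
      nlinarith [abs_nonneg u, abs_nonneg v]
    have h2 : |t φ| ^ α ≤ (|u| + |v|) ^ α := pow_le_pow_left₀ (abs_nonneg _) h1 α
    have h3 : |G φ| ≤ (|a| + |b|) * (|u| + |v|) ^ α := by
      rw [hG]
      refine (abs_add_le _ _).trans ?_
      rw [abs_mul, abs_mul]
      have r1 := (abs_reluPow_le α (t φ)).trans h2
      have r2 : |reluPow α (-(t φ))| ≤ (|u| + |v|) ^ α := by
        have h' := abs_reluPow_le α (-(t φ))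
        rw [abs_neg] at h'
        exact h'.trans h2
      nlinarith [abs_nonneg a, abs_nonneg b, abs_nonneg (reluPow α (t φ)),
        abs_nonneg (reluPow α (-(t φ)))]
    calc |G φ * Real.cos ((M:ℝ) * φ)| = |G φ| * |Real.cos ((M:ℝ) * φ)| := abs_mul _ _
      _ ≤ |G φ| * 1 := by
          have := Real.abs_cos_le_one ((M:ℝ) * φ)
          nlinarith [abs_nonneg (G φ)]
      _ ≤ (|a| + |b|) * (|u| + |v|) ^ α := by rw [mul_one]; exact h3
  have hIntAny : ∀ g : ℝ → ℝ, Measurable g → (∀ φ, |g φ| ≤ C) →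
      ∀ x y : ℝ, IntervalIntegrable g volume x y := by
    intro g hgm hgb x y
    apply IntervalIntegrable.mono_fun (g := g) (_root_.intervalIntegrable_const (c := C))
    · exact hgm.aestronglyMeasurable
    · refine Filter.Eventually.of_forall fun φ => ?_
      simpa using (hgb φ).trans (le_abs_self C)
  have hFi : ∀ x y : ℝ, IntervalIntegrable F volume x y := hIntAny F hFm hbound
  have hFsi : ∀ x y : ℝ, IntervalIntegrable (fun φ => F (φ + π)) volume x y :=
    hIntAny _ (hFm.comp (by fun_prop)) (fun φ => hbound _)
  -- fold
  have hsplit : ∫ φ in (0:ℝ)..(2 * π), F φ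
      = ∫ φ in (0:ℝ)..π, (F φ + F (φ + π)) := by
    rw [← integral_add_adjacent_intervals (hFi 0 π) (hFi π (2 * π))]
    have hshift : ∫ φ in π..(2 * π), F φ = ∫ φ in (0:ℝ)..π, F (φ + π) := by
      have h := integral_comp_add_right (a := (0:ℝ)) (b := π) F π
      rw [zero_add, ← two_mul] at h
      exact h.symm
    rw [hshift, intervalIntegral.integral_add (hFi 0 π) (hFsi 0 π)]
  -- shift formulas
  have ht_shift : ∀ φ, t (φ + π) = -(t φ) := by
    intro φ; rw [hts]; simp only [Real.cos_add_pi, Real.sin_add_pi]; ring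
  have hcosM : Real.cos ((M : ℝ) * π) = (-1 : ℝ) ^ α := by
    have h := Real.cos_int_mul_pi_sub 0 (M : ℤ)
    simp only [sub_zero, Real.cos_zero, mul_one] at h
    rw [show (((M : ℤ) : ℝ)) = (M : ℝ) by push_cast; ring] at h
    rw [h]
    rw [show ((-1 : ℝ) ^ (M : ℤ)) = (-1 : ℝ) ^ M by rw [zpow_natCast]]
    rw [hM, pow_add]; norm_num
  have hsinM : Real.sin ((M : ℝ) * π) = 0 := by
    have h := Real.sin_int_mul_pi (M : ℤ)
    rwa [show (((M : ℤ) : ℝ)) = (M : ℝ) by push_cast; ring] at h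
  have hcs : ∀ φ, Real.cos ((M : ℝ) * (φ + π)) = (-1 : ℝ) ^ α * Real.cos ((M : ℝ) * φ) := by
    intro φ
    rw [mul_add, Real.cos_add, hcosM, hsinM]
    ring
  -- main case split
  by_cases huv : u = 0 ∧ v = 0
  · have : ∀ φ, F φ = 0 := by
      intro φ
      rw [hF, hG, hts, huv.1, huv.2]
      simp [reluPow_zero]
    rw [show F = fun _ => (0:ℝ) from funext this]
    simp
  · have hZ : (volume : Measure ℝ) {φ : ℝ | t φ = 0} = 0 :=
      (zeros_countable huv).measure_zero volume
    have hae : ∀ᵐ φ ∂(volume : Measure ℝ), φ ∈ Set.uIoc (0:ℝ) π →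
        F φ + F (φ + π) = (a + (-1 : ℝ) ^ α * b) * ((t φ) ^ α * Real.cos ((M : ℝ) * φ)) := by
      filter_upwards [measure_eq_zero_iff_ae_notMem.mp hZ] with φ hφ _
      have htφ : t φ ≠ 0 := hφ
      have hb := bracket_eq α a b htφ
      simp only [hF, hG, ht_shift, hcs, neg_neg]
      linear_combination Real.cos ((M:ℝ) * φ) * hb
    rw [hsplit, intervalIntegral.integral_congr_ae hae,
      intervalIntegral.integral_const_mul]
    have h0 : ∫ φ in (0:ℝ)..π, (t φ) ^ α * Real.cos ((M:ℝ) * φ) = 0 := by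
      simp only [hts, hM]
      exact key_poly α u v
    rw [h0, mul_zero]

noncomputable def circlePt (n : ℕ) (φ : ℝ) : EuclideanSpace ℝ (Fin (n + 2)) :=
  (EuclideanSpace.equiv (Fin (n + 2)) ℝ).symm
    (fun i => if i = 0 then Real.cos φ else if i = 1 then Real.sin φ else 0)

lemma circlePt_apply (n : ℕ) (φ : ℝ) (i : Fin (n + 2)) :
    circlePt n φ i = if i = 0 then Real.cos φ else if i = 1 then Real.sin φ else 0 := rfl

lemma fin_zero_ne_one (n : ℕ) : (0 : Fin (n + 2)) ≠ 1 := by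
  intro h
  have := congrArg Fin.val h
  simp [Fin.val_one] at this

lemma circlePt_continuous (n : ℕ) : Continuous (circlePt n) := by
  apply (EuclideanSpace.equiv (Fin (n + 2)) ℝ).symm.continuous.comp
  apply continuous_pi
  intro i
  split_ifs
  · exact Real.continuous_cos
  · exact Real.continuous_sin
  · exact continuous_const

lemma circlePt_sum (n : ℕ) (f : Fin (n + 2) → ℝ) (g : ℝ → ℝ → ℝ)
    (hg : ∀ i : Fin (n + 2), i ≠ 0 → i ≠ 1 → f i = 0) :
    ∑ i, f i = f 0 + f 1 := by
  rw [← Finset.sum_subset (Finset.subset_univ ({0, 1} : Finset (Fin (n + 2))))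
    (fun i _ hi => by
      simp only [Finset.mem_insert, Finset.mem_singleton] at hi
      push_neg at hi
      exact hg i hi.1 hi.2)]
  rw [Finset.sum_insert (by simp [fin_zero_ne_one n]), Finset.sum_singleton]

lemma circlePt_norm (n : ℕ) (φ : ℝ) : ‖circlePt n φ‖ = 1 := by
  rw [EuclideanSpace.norm_eq]
  have : ∑ i, ‖circlePt n φ i‖ ^ 2 = ‖circlePt n φ 0‖ ^ 2 + ‖circlePt n φ 1‖ ^ 2 := by
    apply circlePt_sum n _ (fun _ _ => 0)
    intro i h0 h1
    rw [circlePt_apply, if_neg h0, if_neg h1]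
    simp
  rw [this, circlePt_apply, circlePt_apply, if_pos rfl, if_neg (fin_zero_ne_one n).symm, if_pos rfl]
  rw [Real.norm_eq_abs, Real.norm_eq_abs, sq_abs, sq_abs]
  rw [Real.cos_sq_add_sin_sq]
  exact Real.sqrt_one

lemma circlePt_mem_sphere (n : ℕ) (φ : ℝ) :
    circlePt n φ ∈ Metric.sphere (0 : EuclideanSpace ℝ (Fin (n + 2))) 1 := by
  rw [mem_sphere_zero_iff_norm]
  exact circlePt_norm n φ

lemma circlePt_inner (n : ℕ) (φ : ℝ) (θ : EuclideanSpace ℝ (Fin (n + 2))) :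
    ⟪circlePt n φ, θ⟫ = θ 0 * Real.cos φ + θ 1 * Real.sin φ := by
  rw [PiLp.inner_apply]
  have h' : ∀ i : Fin (n+2), (inner ℝ (circlePt n φ i) (θ i) : ℝ) = circlePt n φ i * θ i := by
    intro i
    simp [RCLike.inner_apply, starRingEnd_apply, star_trivial, mul_comm]
  simp only [h']
  rw [circlePt_sum n _ (fun _ _ => 0) (fun i h0 h1 => by
    rw [circlePt_apply, if_neg h0, if_neg h1, zero_mul])]
  rw [circlePt_apply, circlePt_apply, if_pos rfl, if_neg (fin_zero_ne_one n).symm, if_pos rfl]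
  ring

lemma cosk_integral {k : ℕ} (hk : k ≠ 0) : ∫ φ in (0:ℝ)..(2*π), Real.cos ((k:ℝ)*φ) = 0 := by
  have hkr : (k : ℝ) ≠ 0 := Nat.cast_ne_zero.mpr hk
  rw [intervalIntegral.integral_comp_mul_left (f := Real.cos) hkr]
  rw [mul_zero, integral_cos, Real.sin_zero, sub_zero]
  have : (k:ℝ) * (2*π) = ((2 * k : ℤ) : ℝ) * π := by push_cast; ring
  rw [this, Real.sin_int_mul_pi, smul_zero]

lemma cosk_sq_integral {k : ℕ} (hk : k ≠ 0) :
    ∫ φ in (0:ℝ)..(2*π), Real.cos ((k:ℝ)*φ) ^ 2 = π := by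
  have h1 : ∀ φ : ℝ, Real.cos ((k:ℝ)*φ) ^ 2 = 1/2 + (1/2) * Real.cos (((2*k : ℕ):ℝ)*φ) := by
    intro φ
    rw [Real.cos_sq ((k:ℝ)*φ)]
    push_cast; ring_nf
  rw [intervalIntegral.integral_congr (g := fun φ => 1/2 + (1/2) * Real.cos (((2*k:ℕ):ℝ)*φ))
    (fun φ _ => h1 φ)]
  have hi : IntervalIntegrable (fun φ : ℝ => 1/2 * Real.cos (((2*k:ℕ):ℝ)*φ)) volume 0 (2*π) := by
    apply Continuous.intervalIntegrable; fun_prop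
  rw [intervalIntegral.integral_add (intervalIntegrable_const) hi]
  rw [intervalIntegral.integral_const_mul, cosk_integral (by omega : 2*k ≠ 0)]
  simp
  ring

/-- for `K = S^d` and an α-positive homogeneous activation
`σ(t) = a(t)_+^α + b(−t)_+^α`, the `F₁` and `F₂` IPMs are not distances: there exist
probability measures `μ ≠ ν` on `S^d` whose generalized moments
`θ ↦ ∫ σ(⟨x,θ⟩) dμ(x)` all coincide. -/
theorem stmt_4 (d α : ℕ) (hd : 1 ≤ d) (a b : ℝ) :
    ∃ μ ν : Measure (Metric.sphere (0 : EuclideanSpace ℝ (Fin (d + 1))) 1),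
      IsProbabilityMeasure μ ∧ IsProbabilityMeasure ν ∧ μ ≠ ν ∧
      ∀ θ : Metric.sphere (0 : EuclideanSpace ℝ (Fin (d + 1))) 1,
        ∫ x, (a * reluPow α ⟪(x : EuclideanSpace ℝ (Fin (d + 1))),
                  (θ : EuclideanSpace ℝ (Fin (d + 1)))⟫
              + b * reluPow α (-⟪(x : EuclideanSpace ℝ (Fin (d + 1))),
                  (θ : EuclideanSpace ℝ (Fin (d + 1)))⟫)) ∂μ
          = ∫ x, (a * reluPow α ⟪(x : EuclideanSpace ℝ (Fin (d + 1))),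
                  (θ : EuclideanSpace ℝ (Fin (d + 1)))⟫
              + b * reluPow α (-⟪(x : EuclideanSpace ℝ (Fin (d + 1))),
                  (θ : EuclideanSpace ℝ (Fin (d + 1)))⟫)) ∂ν := by
  obtain ⟨n, rfl⟩ : ∃ n, d = n + 1 := ⟨d - 1, by omega⟩
  set M : ℕ := α + 2 with hMdef
  have hM0 : M ≠ 0 := by omega
  have hπ : (0:ℝ) < 2 * π := by positivity
  set S := Metric.sphere (0 : EuclideanSpace ℝ (Fin (n + 1 + 1))) 1 with hS
  set p : ℝ → S := fun φ => ⟨circlePt n φ, circlePt_mem_sphere n φ⟩ with hp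
  have hpc : Continuous p := Continuous.subtype_mk (circlePt_continuous n) _
  have hpm : Measurable p := hpc.measurable
  set m : Measure ℝ := volume.restrict (Set.Ioc 0 (2 * π)) with hm
  have hm_univ : m Set.univ = ENNReal.ofReal (2 * π) := by
    rw [hm, Measure.restrict_apply_univ, Real.volume_Ioc, sub_zero]
  have hfin : IsFiniteMeasure m := ⟨by rw [hm_univ]; exact ENNReal.ofReal_lt_top⟩
  have hIntm : ∀ g : ℝ → ℝ, Measurable g → (∃ C, ∀ φ, |g φ| ≤ C) → Integrable g m := by
    rintro g hgm ⟨C, hC⟩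
    exact (integrable_const (|C|)).mono' hgm.aestronglyMeasurable
      (Filter.Eventually.of_forall fun φ => by
        rw [Real.norm_eq_abs]; exact (hC φ).trans (le_abs_self C))
  have hconv : ∀ g : ℝ → ℝ, ∫ φ, g φ ∂m = ∫ φ in (0:ℝ)..(2*π), g φ :=
    fun g => (intervalIntegral.integral_of_le hπ.le).symm
  -- base measures
  set P1 : Measure ℝ := (ENNReal.ofReal (2 * π))⁻¹ • m with hP1
  set dens : ℝ → ℝ := fun φ => (1 + Real.cos ((M:ℝ) * φ)) / (2 * π) with hdens
  have hdens_nonneg : ∀ φ, 0 ≤ dens φ := by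
    intro φ
    have h1 := Real.neg_one_le_cos ((M:ℝ)*φ)
    simp only [hdens]
    have : (0:ℝ) ≤ 1 + Real.cos ((M:ℝ)*φ) := by linarith
    positivity
  have hdens_m : Measurable dens := by rw [hdens]; fun_prop
  have hdens_bd : ∀ φ, |dens φ| ≤ 2 / (2*π) := by
    intro φ
    rw [abs_of_nonneg (hdens_nonneg φ)]
    simp only [hdens]
    have h1 : 1 + Real.cos ((M:ℝ)*φ) ≤ 2 := by
      have := Real.cos_le_one ((M:ℝ)*φ); linarith
    gcongr
  set nnd : ℝ → NNReal := fun φ => (dens φ).toNNReal with hnnd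
  have hnnd_m : Measurable nnd := hdens_m.real_toNNReal
  set P2 : Measure ℝ := m.withDensity (fun φ => ((nnd φ : ENNReal))) with hP2
  have hP1prob : IsProbabilityMeasure P1 := ⟨by
    rw [hP1, Measure.smul_apply, hm_univ, smul_eq_mul,
      ENNReal.inv_mul_cancel (by simpa using hπ) ENNReal.ofReal_ne_top]⟩
  have hcos0 : ∫ φ in (0:ℝ)..(2*π), Real.cos ((M:ℝ)*φ) = 0 := cosk_integral hM0
  have hdens_int : Integrable dens m := hIntm dens hdens_m ⟨2/(2*π), hdens_bd⟩
  have hint_dens : ∫ φ, dens φ ∂m = 1 := by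
    rw [hconv]
    have h1 : Set.EqOn (fun φ => dens φ)
        (fun φ => (2*π)⁻¹ * (1 + Real.cos ((M:ℝ)*φ))) (Set.uIcc (0:ℝ) (2*π)) := by
      intro φ _; rw [hdens]; show _ / _ = _; field_simp
    rw [intervalIntegral.integral_congr h1]
    have hi : IntervalIntegrable (fun φ : ℝ => 1 + Real.cos ((M:ℝ)*φ)) volume 0 (2*π) := by
      apply Continuous.intervalIntegrable; fun_prop
    rw [intervalIntegral.integral_const_mul, intervalIntegral.integral_add
      intervalIntegrable_const (by apply Continuous.intervalIntegrable; fun_prop), hcos0]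
    simp only [intervalIntegral.integral_const, add_zero, smul_eq_mul, mul_one, sub_zero]
    field_simp
  have hP2prob : IsProbabilityMeasure P2 := ⟨by
    rw [hP2, withDensity_apply _ MeasurableSet.univ, Measure.restrict_univ]
    have : ∀ φ, ((nnd φ : ENNReal)) = ENNReal.ofReal (dens φ) := fun φ => rfl
    rw [lintegral_congr this,
      ← ofReal_integral_eq_lintegral_ofReal hdens_int
        (Filter.Eventually.of_forall hdens_nonneg),
      hint_dens, ENNReal.ofReal_one]⟩
  have hmap1 : ∀ f : S → ℝ, Measurable f →
      ∫ x, f x ∂(P1.map p) = (2*π)⁻¹ * ∫ φ, f (p φ) ∂m := by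
    intro f hf
    rw [integral_map hpm.aemeasurable hf.aestronglyMeasurable, hP1,
      MeasureTheory.integral_smul_measure, ENNReal.toReal_inv, ENNReal.toReal_ofReal hπ.le, smul_eq_mul]
  have hmap2 : ∀ f : S → ℝ, Measurable f → (∃ C, ∀ φ, |f (p φ)| ≤ C) →
      ∫ x, f x ∂(P2.map p)
        = (2*π)⁻¹ * ∫ φ, f (p φ) ∂m
          + (2*π)⁻¹ * ∫ φ, f (p φ) * Real.cos ((M:ℝ)*φ) ∂m := by
    rintro f hf ⟨C, hC⟩
    have hfpm : Measurable fun φ => f (p φ) := hf.comp hpm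
    have hint1 : Integrable (fun φ => f (p φ)) m := hIntm _ hfpm ⟨C, hC⟩
    have hint2 : Integrable (fun φ => f (p φ) * Real.cos ((M:ℝ)*φ)) m := by
      refine hIntm _ (by fun_prop) ⟨C, fun φ => ?_⟩
      rw [abs_mul]
      have h1 := Real.abs_cos_le_one ((M:ℝ)*φ)
      have h2 := hC φ
      have h3 := abs_nonneg (f (p φ))
      nlinarith
    rw [integral_map hpm.aemeasurable hf.aestronglyMeasurable, hP2,
      integral_withDensity_eq_integral_smul hnnd_m]
    have h1 : ∀ φ : ℝ, nnd φ • f (p φ)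
        = (2*π)⁻¹ * f (p φ) + (2*π)⁻¹ * (f (p φ) * Real.cos ((M:ℝ)*φ)) := by
      intro φ
      rw [NNReal.smul_def, hnnd]
      show ((dens φ).toNNReal : ℝ) * f (p φ) = _
      rw [Real.coe_toNNReal _ (hdens_nonneg φ)]
      simp only [hdens]
      field_simp
    simp only [h1]
    rw [integral_add (hint1.const_mul _) (hint2.const_mul _),
      MeasureTheory.integral_const_mul, MeasureTheory.integral_const_mul]
  refine ⟨P1.map p, P2.map p, Measure.isProbabilityMeasure_map hpm.aemeasurable,
    Measure.isProbabilityMeasure_map hpm.aemeasurable, ?_, ?_⟩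
  · -- μ ≠ ν
    intro heq
    set F : S → ℝ := fun x => (Polynomial.Chebyshev.T ℝ (M:ℤ)).eval
      ((inner ℝ (EuclideanSpace.single (0 : Fin (n+1+1)) (1:ℝ))
        ((x : EuclideanSpace ℝ (Fin (n + 1 + 1))))) : ℝ) with hFdef
    have hFm : Measurable F := by
      apply Continuous.measurable
      apply (Polynomial.Chebyshev.T ℝ (M:ℤ)).continuous_aeval.comp
      exact Continuous.inner continuous_const continuous_subtype_val
    have hFp : ∀ φ, F (p φ) = Real.cos ((M:ℝ)*φ) := by
      intro φ
      simp only [hFdef, hp]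
      rw [show ((inner ℝ (EuclideanSpace.single (0 : Fin (n+1+1)) (1:ℝ)) (circlePt n φ)) : ℝ)
          = Real.cos φ by
        rw [EuclideanSpace.inner_single_left]
        simp [circlePt_apply]]
      rw [Polynomial.Chebyshev.T_real_cos]
      norm_num
    have hFbd : ∀ φ, |F (p φ)| ≤ 1 := fun φ => by
      rw [hFp]; exact Real.abs_cos_le_one _
    have h1 := hmap1 F hFm
    have h2 := hmap2 F hFm ⟨1, hFbd⟩
    have h3 : ∫ φ, F (p φ) * Real.cos ((M:ℝ)*φ) ∂m = π := by
      have he : (fun φ => F (p φ) * Real.cos ((M:ℝ)*φ))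
          = fun φ => Real.cos ((M:ℝ)*φ) ^ 2 := by
        funext φ; rw [hFp]; ring
      rw [he, hconv _, cosk_sq_integral hM0]
    rw [heq, h2, h3] at h1
    have : (2*π)⁻¹ * π > 0 := by positivity
    linarith
  · -- moments
    intro θ
    set u : ℝ := (θ : EuclideanSpace ℝ (Fin (n + 1 + 1))) 0 with hu
    set v : ℝ := (θ : EuclideanSpace ℝ (Fin (n + 1 + 1))) 1 with hv
    set f : S → ℝ := fun x =>
      a * reluPow α ⟪(x : EuclideanSpace ℝ (Fin (n + 1 + 1))),
          (θ : EuclideanSpace ℝ (Fin (n + 1 + 1)))⟫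
        + b * reluPow α (-⟪(x : EuclideanSpace ℝ (Fin (n + 1 + 1))),
          (θ : EuclideanSpace ℝ (Fin (n + 1 + 1)))⟫) with hfdef
    have hipc : Continuous fun x : S => (⟪(x : EuclideanSpace ℝ (Fin (n + 1 + 1))),
        (θ : EuclideanSpace ℝ (Fin (n + 1 + 1)))⟫ : ℝ) :=
      Continuous.inner continuous_subtype_val continuous_const
    have hfm : Measurable f := by
      rw [hfdef]
      exact (measurable_const.mul ((measurable_reluPow α).comp hipc.measurable)).add
        (measurable_const.mul ((measurable_reluPow α).comp hipc.measurable.neg))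
    have hip : ∀ x : S, |(⟪(x : EuclideanSpace ℝ (Fin (n + 1 + 1))),
        (θ : EuclideanSpace ℝ (Fin (n + 1 + 1)))⟫ : ℝ)| ≤ 1 := by
      intro x
      have h := abs_real_inner_le_norm (x : EuclideanSpace ℝ (Fin (n + 1 + 1)))
        (θ : EuclideanSpace ℝ (Fin (n + 1 + 1)))
      have hx : ‖(x : EuclideanSpace ℝ (Fin (n + 1 + 1)))‖ = 1 :=
        mem_sphere_zero_iff_norm.mp x.2
      have hθ : ‖(θ : EuclideanSpace ℝ (Fin (n + 1 + 1)))‖ = 1 :=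
        mem_sphere_zero_iff_norm.mp θ.2
      rw [hx, hθ, one_mul] at h
      exact h
    have hbd : ∀ φ, |f (p φ)| ≤ |a| + |b| := by
      intro φ
      simp only [hfdef]
      have h2 : ∀ s : ℝ, |s| ≤ 1 → |reluPow α s| ≤ 1 := fun s hs =>
        (abs_reluPow_le α s).trans (pow_le_one₀ (abs_nonneg s) hs)
      have r1 := h2 _ (hip (p φ))
      have r2 := h2 (-(⟪((p φ : S) : EuclideanSpace ℝ (Fin (n + 1 + 1))),
          (θ : EuclideanSpace ℝ (Fin (n + 1 + 1)))⟫ : ℝ)) (by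
        rw [abs_neg]; exact hip (p φ))
      refine (abs_add_le _ _).trans ?_
      rw [abs_mul, abs_mul]
      have ha := abs_nonneg a
      have hb := abs_nonneg b
      have h4 := abs_nonneg (reluPow α (⟪((p φ : S) : EuclideanSpace ℝ (Fin (n + 1 + 1))),
          (θ : EuclideanSpace ℝ (Fin (n + 1 + 1)))⟫ : ℝ))
      have h5 := abs_nonneg (reluPow α (-(⟪((p φ : S) : EuclideanSpace ℝ (Fin (n + 1 + 1))),
          (θ : EuclideanSpace ℝ (Fin (n + 1 + 1)))⟫ : ℝ)))
      nlinarith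
    rw [hmap1 f hfm, hmap2 f hfm ⟨|a| + |b|, hbd⟩]
    have hz : ∫ φ, f (p φ) * Real.cos ((M:ℝ)*φ) ∂m = 0 := by
      rw [hconv]
      have he : Set.EqOn (fun φ => f (p φ) * Real.cos ((M:ℝ)*φ))
          (fun φ => (a * reluPow α (u * Real.cos φ + v * Real.sin φ)
            + b * reluPow α (-(u * Real.cos φ + v * Real.sin φ))) * Real.cos (((α + 2 : ℕ):ℝ) * φ))
          (Set.uIcc (0:ℝ) (2*π)) := by
        intro φ _
        have hinner : (⟪((p φ : S) : EuclideanSpace ℝ (Fin (n + 1 + 1))),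
            (θ : EuclideanSpace ℝ (Fin (n + 1 + 1)))⟫ : ℝ)
            = u * Real.cos φ + v * Real.sin φ := by
          have := circlePt_inner n φ (θ : EuclideanSpace ℝ (Fin (n + 1 + 1)))
          rw [hu, hv]
          exact this
        simp only [hfdef, hMdef]
        rw [hinner]
      rw [intervalIntegral.integral_congr he, key_sigma α a b u v]
    rw [hz, mul_zero, add_zero]
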